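/- Let G be a simple graph with n vertices, signless Laplacian Q = D + A, adjacency spread s(G) = λ₁ - λₙ, maximum degree Δ and minimum degree δ. Then |Δ - δ - s(G)| ≤ s_Q(G) ≤ s(G) + Δ - δ, where s_Q(G) is the spread of Q. -/

import Mathlib

open Matrix
open Finset

variable {n : ℕ}

lemma unit_dot {U : Matrix (Fin n) (Fin n) ℝ} (hU : U ∈ Matrix.unitaryGroup (Fin n) ℝ)
    (a b : Fin n → ℝ) : (U *ᵥ a) ⬝ᵥ (U *ᵥ b) = a ⬝ᵥ b := by
  have h1 : Uᵀ * U = 1 := by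
    have := (Matrix.mem_unitaryGroup_iff').mp hU
    simpa [Matrix.star_eq_conjTranspose, Matrix.conjTranspose_eq_transpose_of_trivial] using this
  rw [dotProduct_mulVec, ← vecMul_transpose, vecMul_vecMul, h1, vecMul_one]

lemma rayleigh_decomp {M : Matrix (Fin n) (Fin n) ℝ} (hM : M.IsHermitian) (x : Fin n → ℝ) :
    x ⬝ᵥ (M *ᵥ x) =
      ∑ i, hM.eigenvalues i * ((star (hM.eigenvectorUnitary : Matrix (Fin n) (Fin n) ℝ) *ᵥ x) i)^2 ∧
    x ⬝ᵥ x = ∑ i, ((star (hM.eigenvectorUnitary : Matrix (Fin n) (Fin n) ℝ) *ᵥ x) i)^2 := by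
  set U : Matrix (Fin n) (Fin n) ℝ := (hM.eigenvectorUnitary : Matrix (Fin n) (Fin n) ℝ) with hU
  have hUmem : U ∈ Matrix.unitaryGroup (Fin n) ℝ := hM.eigenvectorUnitary.2
  set y : Fin n → ℝ := star U *ᵥ x with hy
  have hxy : x = U *ᵥ y := by
    rw [hy, mulVec_mulVec, (Matrix.mem_unitaryGroup_iff).mp hUmem, one_mulVec]
  constructor
  · conv_lhs => rw [hM.spectral_theorem, Unitary.conjStarAlgAut_apply]
    rw [← mulVec_mulVec, ← mulVec_mulVec, ← hy]
    nth_rewrite 1 [hxy]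
    rw [unit_dot hUmem]
    simp only [dotProduct, mulVec_diagonal, Function.comp_apply, RCLike.ofReal_real_eq_id, id_eq]
    exact Finset.sum_congr rfl fun i _ => by ring
  · nth_rewrite 1 [hxy, hxy]
    rw [unit_dot hUmem]
    simp [dotProduct, sq]

lemma rayleigh_bounds {M : Matrix (Fin n) (Fin n) ℝ} (hM : M.IsHermitian) (x : Fin n → ℝ) :
    (⨅ i, hM.eigenvalues i) * (x ⬝ᵥ x) ≤ x ⬝ᵥ (M *ᵥ x) ∧
    x ⬝ᵥ (M *ᵥ x) ≤ (⨆ i, hM.eigenvalues i) * (x ⬝ᵥ x) := by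
  obtain ⟨h1, h2⟩ := rayleigh_decomp hM x
  rw [h1, h2, Finset.mul_sum, Finset.mul_sum]
  constructor <;> refine Finset.sum_le_sum fun i _ => ?_
  · exact mul_le_mul_of_nonneg_right (ciInf_le (Set.Finite.bddBelow (Set.finite_range _)) i)
      (sq_nonneg _)
  · exact mul_le_mul_of_nonneg_right (le_ciSup (Set.Finite.bddAbove (Set.finite_range _)) i)
      (sq_nonneg _)

lemma eigvec_fact {M : Matrix (Fin n) (Fin n) ℝ} (hM : M.IsHermitian) (i : Fin n) :
    (⇑(hM.eigenvectorBasis i) : Fin n → ℝ) ⬝ᵥ ⇑(hM.eigenvectorBasis i) = 1 ∧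
    (⇑(hM.eigenvectorBasis i) : Fin n → ℝ) ⬝ᵥ (M *ᵥ ⇑(hM.eigenvectorBasis i)) =
      hM.eigenvalues i := by
  have h1 : (inner ℝ (hM.eigenvectorBasis i) (hM.eigenvectorBasis i) : ℝ) = 1 := by
    rw [real_inner_self_eq_norm_sq, hM.eigenvectorBasis.orthonormal.1 i]; norm_num
  have hd : (⇑(hM.eigenvectorBasis i) : Fin n → ℝ) ⬝ᵥ ⇑(hM.eigenvectorBasis i) = 1 := by
    rw [← h1, PiLp.inner_apply]
    simp [dotProduct, sq]
  refine ⟨hd, ?_⟩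
  rw [hM.mulVec_eigenvectorBasis, dotProduct_smul, hd]
  simp

/-- The spread of a Hermitian real matrix: largest minus smallest eigenvalue. -/
noncomputable def spread {n : ℕ} {A : Matrix (Fin n) (Fin n) ℝ} (hA : A.IsHermitian) : ℝ :=
  (⨆ i, hA.eigenvalues i) - ⨅ i, hA.eigenvalues i

/-- The signless Laplacian matrix Q = D + A of a simple graph. -/
noncomputable def signlessLaplacian {n : ℕ} (G : SimpleGraph (Fin n)) [DecidableRel G.Adj] :
    Matrix (Fin n) (Fin n) ℝ :=
  Matrix.diagonal (fun i => (G.degree i : ℝ)) + G.adjMatrix ℝ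

theorem spread_Q_between {n : ℕ} (G : SimpleGraph (Fin n)) [DecidableRel G.Adj]
    (hA : (G.adjMatrix ℝ).IsHermitian) (hQ : (signlessLaplacian G).IsHermitian) :
    |(G.maxDegree : ℝ) - (G.minDegree : ℝ) - spread hA| ≤ spread hQ ∧
      spread hQ ≤ spread hA + (G.maxDegree : ℝ) - (G.minDegree : ℝ) := by
  rcases Nat.eq_zero_or_pos n with hn | hn
  · subst hn
    have hmax : G.maxDegree = 0 := by
      simp [SimpleGraph.maxDegree, Finset.univ_eq_empty]
    have hmin : G.minDegree = 0 := by
      simp [SimpleGraph.minDegree, Finset.univ_eq_empty]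
    simp [spread, hmax, hmin, Real.iSup_of_isEmpty, Real.iInf_of_isEmpty]
  haveI : NeZero n := ⟨hn.ne'⟩
  haveI : Nonempty (Fin n) := ⟨⟨0, hn⟩⟩
  set μ := hA.eigenvalues with hμ
  set q := hQ.eigenvalues with hq
  set Δ : ℝ := (G.maxDegree : ℝ) with hΔ
  set δ : ℝ := (G.minDegree : ℝ) with hδ
  -- decomposition of Q quadratic form
  have hsplit : ∀ v : Fin n → ℝ, v ⬝ᵥ (signlessLaplacian G *ᵥ v) =
      v ⬝ᵥ (Matrix.diagonal (fun i => (G.degree i : ℝ)) *ᵥ v) + v ⬝ᵥ (G.adjMatrix ℝ *ᵥ v) := by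
    intro v
    rw [signlessLaplacian, add_mulVec, dotProduct_add]
  -- diagonal quadratic form bounds
  have hD : ∀ v : Fin n → ℝ,
      δ * (v ⬝ᵥ v) ≤ v ⬝ᵥ (Matrix.diagonal (fun i => (G.degree i : ℝ)) *ᵥ v) ∧
      v ⬝ᵥ (Matrix.diagonal (fun i => (G.degree i : ℝ)) *ᵥ v) ≤ Δ * (v ⬝ᵥ v) := by
    intro v
    have hdl : ∀ i, δ ≤ (G.degree i : ℝ) := fun i => by
      rw [hδ]; exact_mod_cast G.minDegree_le_degree i
    have hdu : ∀ i, (G.degree i : ℝ) ≤ Δ := fun i => by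
      rw [hΔ]; exact_mod_cast G.degree_le_maxDegree i
    simp only [dotProduct, mulVec_diagonal, Finset.mul_sum]
    constructor <;> refine Finset.sum_le_sum fun i _ => ?_
    · nlinarith [hdl i, sq_nonneg (v i)]
    · nlinarith [hdu i, sq_nonneg (v i)]
  -- basic sup/inf facts
  have hμle : ∀ i, μ i ≤ ⨆ j, μ j := fun i =>
    le_ciSup (Set.Finite.bddAbove (Set.finite_range _)) i
  have hμge : ∀ i, (⨅ j, μ j) ≤ μ i := fun i =>
    ciInf_le (Set.Finite.bddBelow (Set.finite_range _)) i
  have hqle : ∀ i, q i ≤ ⨆ j, q j := fun i =>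
    le_ciSup (Set.Finite.bddAbove (Set.finite_range _)) i
  have hqge : ∀ i, (⨅ j, q j) ≤ q i := fun i =>
    ciInf_le (Set.Finite.bddBelow (Set.finite_range _)) i
  obtain ⟨iQmax, hiQmax⟩ := exists_eq_ciSup_of_finite (f := q)
  obtain ⟨iQmin, hiQmin⟩ := exists_eq_ciInf_of_finite (f := q)
  obtain ⟨iAmax, hiAmax⟩ := exists_eq_ciSup_of_finite (f := μ)
  obtain ⟨iAmin, hiAmin⟩ := exists_eq_ciInf_of_finite (f := μ)
  -- 1 & 2 : bounds on q1 and qn via eigenvectors of Q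
  have h1 : (⨆ j, q j) ≤ (⨆ j, μ j) + Δ := by
    obtain ⟨hu, he⟩ := eigvec_fact hQ iQmax
    set v := (⇑(hQ.eigenvectorBasis iQmax) : Fin n → ℝ)
    have := (hD v).2
    have hA2 := (rayleigh_bounds hA v).2
    rw [hsplit v] at he
    rw [hu] at this hA2
    rw [← hiQmax]
    linarith
  have h2 : (⨅ j, μ j) + δ ≤ ⨅ j, q j := by
    obtain ⟨hu, he⟩ := eigvec_fact hQ iQmin
    set v := (⇑(hQ.eigenvectorBasis iQmin) : Fin n → ℝ)
    have := (hD v).1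
    have hA2 := (rayleigh_bounds hA v).1
    rw [hsplit v] at he
    rw [hu] at this hA2
    rw [← hiQmin]
    linarith
  -- 3 & 4 : bounds on λ1 and λn via eigenvectors of A
  have h3 : (⨆ j, μ j) ≤ (⨆ j, q j) - δ := by
    obtain ⟨hu, he⟩ := eigvec_fact hA iAmax
    set v := (⇑(hA.eigenvectorBasis iAmax) : Fin n → ℝ)
    have := (hD v).1
    have hQ2 := (rayleigh_bounds hQ v).2
    rw [hsplit v] at hQ2
    rw [hu] at this hQ2
    rw [← hiAmax]
    linarith
  have h4 : (⨅ j, q j) - Δ ≤ ⨅ j, μ j := by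
    obtain ⟨hu, he⟩ := eigvec_fact hA iAmin
    set v := (⇑(hA.eigenvectorBasis iAmin) : Fin n → ℝ)
    have := (hD v).2
    have hQ2 := (rayleigh_bounds hQ v).1
    rw [hsplit v] at hQ2
    rw [hu] at this hQ2
    rw [← hiAmin]
    linarith
  -- 5 & 6 : degrees as Rayleigh quotients of Q at standard basis vectors
  have hsingle : ∀ i : Fin n,
      (Pi.single i 1 : Fin n → ℝ) ⬝ᵥ (signlessLaplacian G *ᵥ Pi.single i 1) = (G.degree i : ℝ) ∧
      (Pi.single i 1 : Fin n → ℝ) ⬝ᵥ (Pi.single i 1 : Fin n → ℝ) = 1 := by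
    intro i
    constructor
    · rw [mulVec_single]
      simp [signlessLaplacian, dotProduct, Pi.single_apply]
    · simp [dotProduct, Pi.single_apply]
  have h5 : Δ ≤ ⨆ j, q j := by
    obtain ⟨i, hi⟩ := G.exists_maximal_degree_vertex
    obtain ⟨he, hu⟩ := hsingle i
    have := (rayleigh_bounds hQ (Pi.single i 1)).2
    rw [he, hu, mul_one] at this
    rw [show Δ = (G.degree i : ℝ) by rw [hΔ]; exact_mod_cast hi]
    exact this
  have h6 : (⨅ j, q j) ≤ δ := by
    obtain ⟨i, hi⟩ := G.exists_minimal_degree_vertex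
    obtain ⟨he, hu⟩ := hsingle i
    have := (rayleigh_bounds hQ (Pi.single i 1)).1
    rw [he, hu, mul_one] at this
    rw [show δ = (G.degree i : ℝ) by rw [hδ]; exact_mod_cast hi]
    exact this
  have h7 : (⨅ j, μ j) ≤ ⨆ j, μ j := le_trans (hμge (Classical.arbitrary _)) (hμle _)
  constructor
  · rw [abs_le]
    constructor
    · simp only [spread, neg_le_sub_iff_le_add]
      linarith
    · simp only [spread]
      linarith
  · simp only [spread]
    linarith
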